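/- arXiv:2012.03017 — 4 statements merged into one kernel-verified Lean document; each statement's English description precedes it below -/
import Mathlib

section
/- Let a_1 ≥ a_2 ≥ ⋯ ≥ a_{2W} be real numbers with a_{2W+1−j} = −a_j for 1 ≤ j ≤ W, and suppose that for every 1 ≤ j ≤ W we have ∑_{i=1}^j a_i ≤ ∑_{i=1}^j γ_i + 2εW, where γ_1 ≥ ⋯ ≥ γ_W > 0 and ε > 0. Then for any γ > 0, ∑_{j=1}^{W+1} (γ − a_j)_+ ≥ 2γ + ((W−1)γ − ∑_{j=1}^{W−1} γ_j)_+ − 2εW. -/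
/-- if `a 1 ≥ … ≥ a (2W)` with the symplectic symmetry `a (2W+1-j) = - a j`,
and partial sums of `a` are bounded by partial sums of the Lyapunov exponents `g` plus `2εW`,
then `∑_{j=1}^{W+1} (γ - a j)_+ ≥ 2γ + ((W-1)γ - ∑_{j=1}^{W-1} g j)_+ - 2εW`. -/
theorem stmt1 (W : ℕ) (hW : 1 ≤ W) (a g : ℕ → ℝ) (ε γ : ℝ) (hε : 0 < ε) (hγ : 0 < γ)
    (ha : ∀ i j, 1 ≤ i → i ≤ j → j ≤ 2 * W → a j ≤ a i)
    (hsym : ∀ j, 1 ≤ j → j ≤ W → a (2 * W + 1 - j) = - a j)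
    (hg : ∀ i j, 1 ≤ i → i ≤ j → j ≤ W → g j ≤ g i)
    (hgpos : 0 < g W)
    (hsum : ∀ j, 1 ≤ j → j ≤ W →
      ∑ i ∈ Finset.Icc 1 j, a i ≤ (∑ i ∈ Finset.Icc 1 j, g i) + 2 * ε * W) :
    ∑ j ∈ Finset.Icc 1 (W + 1), max (γ - a j) 0 ≥
      2 * γ + max (((W : ℝ) - 1) * γ - ∑ j ∈ Finset.Icc 1 (W - 1), g j) 0 - 2 * ε * W := by
  obtain ⟨n, rfl⟩ : ∃ n, W = n + 1 := ⟨W - 1, by omega⟩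
  have hsymW : a (n + 2) = - a (n + 1) := by
    have h := hsym (n + 1) (by omega) (by omega)
    have e : 2 * (n + 1) + 1 - (n + 1) = n + 2 := by omega
    rwa [e] at h
  have hsplit : ∑ j ∈ Finset.Icc 1 (n + 1 + 1), max (γ - a j) 0
      = (∑ j ∈ Finset.Icc 1 n, max (γ - a j) 0) + max (γ - a (n + 1)) 0
        + max (γ - a (n + 2)) 0 := by
    rw [Finset.sum_Icc_succ_top (by omega : 1 ≤ n + 1 + 1),
      Finset.sum_Icc_succ_top (by omega : 1 ≤ n + 1)]
  have h2 : max (γ - a (n + 1)) 0 + max (γ - a (n + 2)) 0 ≥ 2 * γ := by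
    rw [hsymW]
    have h1 := le_max_left (γ - a (n + 1)) 0
    have h2' := le_max_left (γ - -a (n + 1)) 0
    linarith
  have hsub : (n + 1 - 1) = n := by omega
  have hA : (0:ℝ) ≤ ∑ j ∈ Finset.Icc 1 n, max (γ - a j) 0 :=
    Finset.sum_nonneg fun j _ => le_max_right _ _
  have hB : (n:ℝ) * γ - (∑ j ∈ Finset.Icc 1 n, g j) - 2 * ε * (n + 1)
      ≤ ∑ j ∈ Finset.Icc 1 n, max (γ - a j) 0 := by
    rcases Nat.eq_zero_or_pos n with hn | hn
    · subst hn
      simp only [Finset.Icc_self, Nat.cast_zero]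
      have : (0:ℝ) < 2 * ε * (0 + 1) := by linarith
      simp
      nlinarith
    · have hs := hsum n (by omega) (by omega)
      have hle : ∑ j ∈ Finset.Icc 1 n, (γ - a j) ≤
          ∑ j ∈ Finset.Icc 1 n, max (γ - a j) 0 :=
        Finset.sum_le_sum fun j _ => le_max_left _ _
      have hcalc : ∑ j ∈ Finset.Icc 1 n, (γ - a j)
          = (n:ℝ) * γ - ∑ j ∈ Finset.Icc 1 n, a j := by
        rw [Finset.sum_sub_distrib, Finset.sum_const, Nat.card_Icc]
        simp [nsmul_eq_mul]
      push_cast at hs ⊢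
      linarith
  have hmax : max ((n:ℝ) * γ - ∑ j ∈ Finset.Icc 1 n, g j) 0
      ≤ (∑ j ∈ Finset.Icc 1 n, max (γ - a j) 0) + 2 * ε * (n + 1) := by
    apply max_le
    · linarith
    · nlinarith
  rw [hsplit, hsub]
  push_cast
  have e2 : ((n:ℝ) + 1 - 1) * γ = (n:ℝ) * γ := by ring
  rw [e2]
  linarith
end

section
/- Let A be a random subset of [0,1] (on some probability space) and A⁺ ⊇ A a random measurable superset. Suppose there exist η ∈ (0,1] and p ≥ 0 such that: (a) for each λ ∈ [0,1], P{λ ∈ A⁺} ≤ p; (b) almost surely, if λ ∈ A and |λ′ − λ| < η with λ′ ∈ [0,1], then λ′ ∈ A⁺. Then P{A ≠ ∅} ≤ p/η. -/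
open MeasureTheory

/-- Kakutani-type argument: if `A ⊆ A⁺` are random subsets of `[0,1]`,
`P{λ ∈ A⁺} ≤ p` for each `λ ∈ [0,1]` (single-energy bound), and almost surely every
`λ' ∈ [0,1]` with `|λ' − λ| < η` for some `λ ∈ A` belongs to `A⁺` (propagation estimate),
then `P{A ≠ ∅} ≤ p/η`. -/
theorem stmt5 {Ω : Type*} [MeasurableSpace Ω] (P : Measure Ω) [IsProbabilityMeasure P]
    (A Aplus : Ω → Set ℝ) (η p : ℝ) (hη : 0 < η) (hη1 : η ≤ 1) (hp : 0 ≤ p)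
    (hsub : ∀ ω, A ω ⊆ Aplus ω)
    (hA01 : ∀ ω, A ω ⊆ Set.Icc 0 1)
    (hmeas : MeasurableSet {q : ℝ × Ω | q.1 ∈ Aplus q.2})
    (hne : MeasurableSet {ω | (A ω).Nonempty})
    (hsingle : ∀ lam ∈ Set.Icc (0 : ℝ) 1, P {ω | lam ∈ Aplus ω} ≤ ENNReal.ofReal p)
    (hprop : ∀ᵐ ω ∂P, ∀ lam ∈ A ω, ∀ lam' ∈ Set.Icc (0 : ℝ) 1,
      |lam' - lam| < η → lam' ∈ Aplus ω) :
    P {ω | (A ω).Nonempty} ≤ ENNReal.ofReal (p / η) := by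
  classical
  set E := {ω | (A ω).Nonempty} with hE
  set g : ℝ × Ω → ENNReal := Set.indicator {q : ℝ × Ω | q.1 ∈ Aplus q.2} (fun _ => 1) with hg
  have hgmeas : Measurable g := measurable_const.indicator hmeas
  set f : Ω → ENNReal := fun ω => ∫⁻ lam in Set.Icc (0:ℝ) 1, g (lam, ω) with hf
  -- upper bound via Fubini
  have upper : ∫⁻ ω, f ω ∂P ≤ ENNReal.ofReal p := by
    have swap : ∫⁻ ω, f ω ∂P = ∫⁻ lam in Set.Icc (0:ℝ) 1, ∫⁻ ω, g (lam, ω) ∂P := by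
      have hsw : AEMeasurable (Function.uncurry fun (ω : Ω) (lam : ℝ) => g (lam, ω))
          (P.prod (volume.restrict (Set.Icc (0:ℝ) 1))) :=
        (hgmeas.comp measurable_swap).aemeasurable
      exact lintegral_lintegral_swap hsw
    rw [swap]
    have hinner : ∀ lam : ℝ, ∫⁻ ω, g (lam, ω) ∂P = P {ω | lam ∈ Aplus ω} := by
      intro lam
      have hs : MeasurableSet {ω | lam ∈ Aplus ω} := measurable_prodMk_left hmeas
      have : ∀ ω, g (lam, ω) = Set.indicator {ω | lam ∈ Aplus ω} (fun _ => 1) ω := by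
        intro ω
        simp only [hg, Set.indicator_apply, Set.mem_setOf_eq]
      simp only [this]
      rw [lintegral_indicator hs]
      simp
    calc ∫⁻ lam in Set.Icc (0:ℝ) 1, ∫⁻ ω, g (lam, ω) ∂P
        ≤ ∫⁻ _lam in Set.Icc (0:ℝ) 1, ENNReal.ofReal p := by
          apply lintegral_mono_ae
          filter_upwards [ae_restrict_mem measurableSet_Icc] with lam hlam
          rw [hinner lam]
          exact hsingle lam hlam
      _ = ENNReal.ofReal p := by
          rw [setLIntegral_const]
          simp [Real.volume_Icc]
  -- lower bound: on E, f ≥ η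
  have hfE : ∀ᵐ ω ∂P, ω ∈ E → ENNReal.ofReal η ≤ f ω := by
    filter_upwards [hprop] with ω hω hωE
    obtain ⟨lam0, hlam0⟩ := hωE
    obtain ⟨h0, h1⟩ := hA01 ω hlam0
    have hSmeas : MeasurableSet {lam : ℝ | lam ∈ Aplus ω} :=
      hmeas.preimage (measurable_id.prodMk measurable_const)
    have hfval : f ω = volume ({lam : ℝ | lam ∈ Aplus ω} ∩ Set.Icc 0 1) := by
      simp only [hf]
      have : ∀ lam : ℝ, g (lam, ω) = Set.indicator {lam : ℝ | lam ∈ Aplus ω} (fun _ => 1) lam := by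
        intro lam
        simp only [hg, Set.indicator_apply, Set.mem_setOf_eq]
      simp only [this]
      rw [lintegral_indicator hSmeas, setLIntegral_one, Measure.restrict_apply hSmeas]
    rw [hfval]
    by_cases hcase : lam0 + η ≤ 1
    · have hsub' : Set.Ico lam0 (lam0 + η) ⊆ {lam : ℝ | lam ∈ Aplus ω} ∩ Set.Icc 0 1 := by
        rintro x ⟨hx1, hx2⟩
        have hx01 : x ∈ Set.Icc (0:ℝ) 1 := ⟨le_trans h0 hx1, le_of_lt (lt_of_lt_of_le hx2 hcase)⟩
        refine ⟨hω lam0 hlam0 x hx01 ?_, hx01⟩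
        rw [abs_sub_lt_iff]
        constructor <;> linarith
      calc ENNReal.ofReal η = volume (Set.Ico lam0 (lam0 + η)) := by
            rw [Real.volume_Ico]; ring_nf
        _ ≤ _ := measure_mono hsub'
    · push_neg at hcase
      have hsub' : Set.Ioc (1 - η) 1 ⊆ {lam : ℝ | lam ∈ Aplus ω} ∩ Set.Icc 0 1 := by
        rintro x ⟨hx1, hx2⟩
        have hx01 : x ∈ Set.Icc (0:ℝ) 1 := ⟨by linarith, hx2⟩
        refine ⟨hω lam0 hlam0 x hx01 ?_, hx01⟩
        rw [abs_sub_lt_iff]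
        constructor <;> linarith
      calc ENNReal.ofReal η = volume (Set.Ioc (1 - η) 1) := by
            rw [Real.volume_Ioc]; ring_nf
        _ ≤ _ := measure_mono hsub'
  have lower : ENNReal.ofReal η * P E ≤ ∫⁻ ω, f ω ∂P := by
    calc ENNReal.ofReal η * P E = ∫⁻ _ω in E, ENNReal.ofReal η ∂P := by
          rw [setLIntegral_const, mul_comm]
      _ ≤ ∫⁻ ω in E, f ω ∂P := by
          apply lintegral_mono_ae
          rw [ae_restrict_iff' hne]
          exact hfE
      _ ≤ ∫⁻ ω, f ω ∂P := setLIntegral_le_lintegral E f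
  have key : ENNReal.ofReal η * P E ≤ ENNReal.ofReal p := lower.trans upper
  rw [ENNReal.ofReal_div_of_pos hη, ENNReal.le_div_iff_mul_le
    (Or.inl (by simpa using hη)) (Or.inl ENNReal.ofReal_ne_top)]
  rwa [mul_comm]
end

section
/- Let D = diag(e^{a_1}, …, e^{a_ℓ}) with a_1 ≥ ⋯ ≥ a_ℓ, let u ∈ S(ℝ^ℓ) be a fixed unit vector, and let U be a random matrix in SO(ℓ) such that Uu is uniformly distributed on the unit sphere. Then for any a with a_1 ≥ a ≥ a_ℓ, P{‖DUu‖_∞ ≤ e^a} ≤ C_ℓ · exp(−∑_{j=1}^ℓ (a_j − a)_+), where C_ℓ depends only on ℓ. -/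
open MeasureTheory Metric Pointwise

lemma abs_coord_le_norm' {ℓ : ℕ} (x : EuclideanSpace ℝ (Fin ℓ)) (j : Fin ℓ) : |x j| ≤ ‖x‖ := by
  rw [EuclideanSpace.norm_eq]
  have h1 : |x j| = Real.sqrt (‖x j‖ ^ 2) := by
    rw [Real.sqrt_sq_eq_abs, Real.norm_eq_abs, abs_abs]
  rw [h1]
  exact Real.sqrt_le_sqrt (Finset.single_le_sum (fun i _ => sq_nonneg ‖x i‖) (Finset.mem_univ j))

lemma min_exp_eq {a b : ℝ} : min (Real.exp (a - b)) 1 = Real.exp (-(max (b - a) 0)) := by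
  rcases le_total b a with h | h
  · rw [max_eq_right (by linarith), min_eq_right (by
      rw [← Real.exp_zero]; exact Real.exp_le_exp.2 (by linarith))]
    simp
  · rw [max_eq_left (by linarith), min_eq_left (by
      rw [← Real.exp_zero]; exact Real.exp_le_exp.2 (by linarith))]
    ring_nf

/-- let `D = diag(e^{a_1}, …, e^{a_ℓ})` with `a_1 ≥ ⋯ ≥ a_ℓ`, `u` a fixed unit
vector, and `U` a random matrix in `SO(ℓ)` such that `Uu` is uniformly distributed on the
unit sphere. Then for `a_1 ≥ a ≥ a_ℓ`,
`P{‖DUu‖_∞ ≤ e^a} ≤ C_ℓ exp(−∑_{j=1}^ℓ (a_j − a)_+)` with `C_ℓ` depending only on `ℓ`. -/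
theorem stmt10 (ℓ : ℕ) (hℓ : 0 < ℓ) :
    ∃ C : ℝ, 0 < C ∧
    ∀ (Ω : Type) (_ : MeasurableSpace Ω) (P : Measure Ω), IsProbabilityMeasure P →
    ∀ (U : Ω → Matrix (Fin ℓ) (Fin ℓ) ℝ) (u : Fin ℓ → ℝ) (aa : ℕ → ℝ) (a : ℝ),
      (∀ i j, 1 ≤ i → i ≤ j → j ≤ ℓ → aa j ≤ aa i) →
      a ≤ aa 1 → aa ℓ ≤ a →
      (∀ ω, U ω ∈ Matrix.orthogonalGroup (Fin ℓ) ℝ ∧ (U ω).det = 1) →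
      (∑ i, u i ^ 2 = 1) →
      (Measure.map (fun ω => (U ω).mulVec u) P
        = Measure.map
            (fun x : sphere (0 : EuclideanSpace ℝ (Fin ℓ)) 1 =>
              (WithLp.equiv 2 (Fin ℓ → ℝ)) (x : EuclideanSpace ℝ (Fin ℓ)))
            ((((volume : Measure (EuclideanSpace ℝ (Fin ℓ))).toSphere Set.univ)⁻¹ •
              (volume : Measure (EuclideanSpace ℝ (Fin ℓ))).toSphere))) →
      P {ω | ∀ j : Fin ℓ, |Real.exp (aa ((j : ℕ) + 1)) * (U ω).mulVec u j| ≤ Real.exp a}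
        ≤ ENNReal.ofReal (C * Real.exp (-(∑ j ∈ Finset.Icc 1 ℓ, max (aa j - a) 0))) := by
  classical
  set σ : Measure (sphere (0 : EuclideanSpace ℝ (Fin ℓ)) 1) :=
    (volume : Measure (EuclideanSpace ℝ (Fin ℓ))).toSphere with hσdef
  set σu : ENNReal := σ Set.univ with hσu
  have hσu_ne_top : σu ≠ ⊤ := measure_ne_top σ Set.univ
  have hσu_ne_zero : σu ≠ 0 := by
    rw [hσu, hσdef, Measure.toSphere_apply_univ]
    simp only [ne_eq, mul_eq_zero, not_or]
    constructor
    · simp [finrank_euclideanSpace_fin, hℓ.ne']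
    · exact (measure_ball_pos _ _ one_pos).ne'
  set K : ENNReal := σu⁻¹ * ℓ * (2 : ENNReal) ^ ℓ with hK
  have hK_ne_top : K ≠ ⊤ := by
    rw [hK]
    exact ENNReal.mul_ne_top (ENNReal.mul_ne_top (ENNReal.inv_ne_top.2 hσu_ne_zero)
      (ENNReal.natCast_ne_top ℓ)) (by simp [ENNReal.pow_ne_top])
  refine ⟨K.toReal + 1, by positivity, ?_⟩
  intro Ω _ P hP U u aa a _hmono _ha1 _haℓ _hU _hu hmap
  set g : sphere (0 : EuclideanSpace ℝ (Fin ℓ)) 1 → (Fin ℓ → ℝ) :=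
    fun x => (WithLp.equiv 2 (Fin ℓ → ℝ)) (x : EuclideanSpace ℝ (Fin ℓ)) with hg_def
  have hg : Measurable g :=
    (PiLp.volume_preserving_ofLp (Fin ℓ)).measurable.comp measurable_subtype_coe
  set T : Set (Fin ℓ → ℝ) :=
    {v | ∀ j : Fin ℓ, |Real.exp (aa ((j : ℕ) + 1)) * v j| ≤ Real.exp a} with hT_def
  have hT : MeasurableSet T := by
    have : T = ⋂ j : Fin ℓ,
        (fun v : Fin ℓ → ℝ => |Real.exp (aa ((j : ℕ) + 1)) * v j|) ⁻¹' Set.Iic (Real.exp a) := by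
      ext v; simp [hT_def]
    rw [this]
    exact MeasurableSet.iInter fun j =>
      (((measurable_pi_apply j).const_mul _).abs) measurableSet_Iic
  set ν := (σu⁻¹ • σ) with hν
  set f : Ω → (Fin ℓ → ℝ) := fun ω => (U ω).mulVec u with hf_def
  have hmap' : Measure.map f P = Measure.map g ν := hmap
  -- the event as a preimage
  have hEvent : {ω | ∀ j : Fin ℓ, |Real.exp (aa ((j : ℕ) + 1)) * (U ω).mulVec u j| ≤ Real.exp a}
      = f ⁻¹' T := rfl
  by_cases hfm : AEMeasurable f P
  · -- main case
    have h1 : P (f ⁻¹' T) = (Measure.map g ν) T := by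
      rw [← hmap', Measure.map_apply_of_aemeasurable hfm hT]
    have h2 : (Measure.map g ν) T = ν (g ⁻¹' T) := Measure.map_apply hg hT
    have hB : MeasurableSet (g ⁻¹' T) := hg hT
    -- the measure of the preimage set
    set m : Fin ℓ → ℝ := fun j => Real.exp (-(max (aa ((j : ℕ) + 1) - a) 0)) with hm_def
    have hm_pos : ∀ j, 0 < m j := fun j => Real.exp_pos _
    set Box : Set (EuclideanSpace ℝ (Fin ℓ)) :=
      (WithLp.equiv 2 (Fin ℓ → ℝ)) ⁻¹' (Set.univ.pi fun j => Set.Icc (-(m j)) (m j)) with hBox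
    have hBoxMeas : MeasurableSet (Set.univ.pi fun j => Set.Icc (-(m j)) (m j)) :=
      MeasurableSet.univ_pi fun j => measurableSet_Icc
    have hsub : Set.Ioo (0 : ℝ) 1 • ((↑) '' (g ⁻¹' T) : Set (EuclideanSpace ℝ (Fin ℓ))) ⊆ Box := by
      rintro y hy
      rw [Set.mem_smul] at hy
      obtain ⟨r, hr, x, hx, rfl⟩ := hy
      obtain ⟨x', hx', rfl⟩ := hx
      intro j _
      simp only [Set.mem_Icc]
      have hxnorm : ‖(x' : EuclideanSpace ℝ (Fin ℓ))‖ = 1 := by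
        have := x'.2
        rwa [mem_sphere_zero_iff_norm] at this
      have hxj1 : |(x' : EuclideanSpace ℝ (Fin ℓ)) j| ≤ 1 :=
        (abs_coord_le_norm' _ j).trans hxnorm.le
      have hxj2 : |(x' : EuclideanSpace ℝ (Fin ℓ)) j| ≤ Real.exp (a - aa ((j : ℕ) + 1)) := by
        have h := hx' j
        rw [abs_mul, abs_of_pos (Real.exp_pos _)] at h
        rw [Real.exp_sub, le_div_iff₀ (Real.exp_pos _), mul_comm]
        exact h
      have hr0 : 0 < r := hr.1
      have hr1 : r < 1 := hr.2
      have key : |(r • (x' : EuclideanSpace ℝ (Fin ℓ))) j| ≤ m j := by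
        have : (r • (x' : EuclideanSpace ℝ (Fin ℓ))) j = r * (x' : EuclideanSpace ℝ (Fin ℓ)) j :=
          rfl
        simp only [this, abs_mul, abs_of_pos hr0, hm_def, ← min_exp_eq]
        refine le_min ?_ ?_
        · calc r * |(x' : EuclideanSpace ℝ (Fin ℓ)) j| ≤ 1 * Real.exp (a - aa ((j : ℕ) + 1)) :=
            mul_le_mul hr1.le hxj2 (abs_nonneg _) zero_le_one
          _ = _ := one_mul _
        · calc r * |(x' : EuclideanSpace ℝ (Fin ℓ)) j| ≤ 1 * 1 :=
            mul_le_mul hr1.le hxj1 (abs_nonneg _) zero_le_one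
          _ = 1 := one_mul 1
      exact abs_le.1 key
    have hBoxVol : volume Box = ∏ j : Fin ℓ, ENNReal.ofReal (2 * m j) := by
      rw [hBox, show ⇑(WithLp.equiv 2 (Fin ℓ → ℝ)) = WithLp.ofLp from rfl, (PiLp.volume_preserving_ofLp (Fin ℓ)).measure_preimage
        hBoxMeas.nullMeasurableSet, volume_pi_pi]
      congr 1
      ext j
      rw [Real.volume_Icc]
      congr 1
      ring
    have hσB : σ (g ⁻¹' T) ≤ (ℓ : ENNReal) * volume Box := by
      rw [hσdef, Measure.toSphere_apply' _ hB]
      rw [finrank_euclideanSpace_fin]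
      exact mul_le_mul_right (measure_mono hsub) _
    -- product computation
    have hprod : (∏ j : Fin ℓ, ENNReal.ofReal (2 * m j))
        = ENNReal.ofReal (2 ^ ℓ * ∏ j : Fin ℓ, m j) := by
      rw [← ENNReal.ofReal_prod_of_nonneg (fun j _ => by positivity)]
      congr 1
      rw [Finset.prod_mul_distrib, Finset.prod_const, Finset.card_univ, Fintype.card_fin]
    have hexp : Real.exp (-(∑ j ∈ Finset.Icc 1 ℓ, max (aa j - a) 0)) = ∏ j : Fin ℓ, m j := by
      have hsum : ∑ j ∈ Finset.Icc 1 ℓ, max (aa j - a) 0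
          = ∑ j : Fin ℓ, max (aa ((j : ℕ) + 1) - a) 0 := by
        rw [Fin.sum_univ_eq_sum_range fun j => max (aa (j + 1) - a) 0, ← Finset.Ico_add_one_right_eq_Icc,
          Finset.sum_Ico_eq_sum_range]
        simp [add_comm]
      rw [hsum, ← Finset.sum_neg_distrib, Real.exp_sum]
    -- put it together
    rw [hEvent, h1, h2, hν, Measure.smul_apply, smul_eq_mul]
    calc σu⁻¹ * σ (g ⁻¹' T) ≤ σu⁻¹ * ((ℓ : ENNReal) * volume Box) :=
        mul_le_mul_right hσB _
      _ = K * ENNReal.ofReal (∏ j : Fin ℓ, m j) := by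
          rw [hBoxVol, hprod, ENNReal.ofReal_mul (by positivity), hK]
          rw [ENNReal.ofReal_pow (by norm_num), ENNReal.ofReal_ofNat]
          ring
      _ ≤ ENNReal.ofReal (K.toReal + 1) * ENNReal.ofReal (∏ j : Fin ℓ, m j) := by
          gcongr
          conv_lhs => rw [← ENNReal.ofReal_toReal hK_ne_top]
          exact ENNReal.ofReal_le_ofReal (by linarith [ENNReal.toReal_nonneg (a := K)])
      _ = ENNReal.ofReal ((K.toReal + 1) * Real.exp
            (-(∑ j ∈ Finset.Icc 1 ℓ, max (aa j - a) 0))) := by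
          rw [hexp, ← ENNReal.ofReal_mul (by positivity)]
  · -- degenerate case: map is zero, contradiction
    exfalso
    have h0 : Measure.map f P = 0 := Measure.map_of_not_aemeasurable hfm
    rw [h0] at hmap'
    have : (Measure.map g ν) Set.univ = 0 := by rw [← hmap']; rfl
    rw [Measure.map_apply hg MeasurableSet.univ, Set.preimage_univ, hν, Measure.smul_apply,
      smul_eq_mul, ENNReal.inv_mul_cancel hσu_ne_zero hσu_ne_top] at this
    exact one_ne_zero this
end

section
/- Let M, M′ be d×d real matrices with singular values s_1(M) > s_2(M) and corresponding top right singular vectors u_1(M), u_1(M′) (unit eigenvectors of MᵀM, resp. M′ᵀM′, for the top eigenvalue). If ‖M − M′‖ ≤ δ and s_1(M) − s_2(M) ≥ g > 0 with δ ≤ g/4, then, for a suitable choice of signs, ‖u_1(M) − u_1(M′)‖ ≤ C·δ/g for an absolute constant C. -/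
open Matrix Finset

namespace Stmt17Aux

variable {d : ℕ}

/-- Euclidean-space wrapper for a plain vector. -/
noncomputable def ev (x : Fin d → ℝ) : EuclideanSpace ℝ (Fin d) :=
  (WithLp.equiv 2 (Fin d → ℝ)).symm x

lemma inner_ev (x y : Fin d → ℝ) : (inner ℝ (ev x) (ev y) : ℝ) = x ⬝ᵥ y := by
  simp [ev, PiLp.inner_apply, dotProduct, mul_comm]

lemma norm_ev_sq (x : Fin d → ℝ) : ‖ev x‖ ^ 2 = x ⬝ᵥ x := by
  rw [← inner_ev, real_inner_self_eq_norm_sq]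

lemma ev_sub (x y : Fin d → ℝ) : ev (x - y) = ev x - ev y := by simp [ev]

lemma ev_add (x y : Fin d → ℝ) : ev (x + y) = ev x + ev y := by simp [ev]

lemma ev_smul (a : ℝ) (x : Fin d → ℝ) : ev (a • x) = a • ev x := by simp [ev]

lemma norm_ev_one {x : Fin d → ℝ} (h : x ⬝ᵥ x = 1) : ‖ev x‖ = 1 := by
  have h2 := norm_ev_sq x
  rw [h] at h2
  rw [← Real.sqrt_sq (norm_nonneg (ev x)), h2, Real.sqrt_one]

lemma orth_dot {W : Matrix (Fin d) (Fin d) ℝ} (hW : Wᵀ * W = 1) (x y : Fin d → ℝ) :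
    (W *ᵥ x) ⬝ᵥ (W *ᵥ y) = x ⬝ᵥ y := by
  rw [dotProduct_mulVec, ← vecMul_transpose, vecMul_vecMul, ← transpose_transpose W,
    ← transpose_mul]
  rw [transpose_transpose, hW]
  simp

/-- Cauchy–Schwarz for dot products. -/
lemma dot_le (x y : Fin d → ℝ) : x ⬝ᵥ y ≤ ‖ev x‖ * ‖ev y‖ := by
  rw [← inner_ev]; exact real_inner_le_norm _ _

/-- Transpose inherits an operator-norm style bound. -/
lemma transpose_op_bound {A : Matrix (Fin d) (Fin d) ℝ} {c : ℝ} (hc : 0 ≤ c)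
    (hA : ∀ x, ‖ev (A *ᵥ x)‖ ≤ c * ‖ev x‖) (y : Fin d → ℝ) :
    ‖ev (Aᵀ *ᵥ y)‖ ≤ c * ‖ev y‖ := by
  set z := Aᵀ *ᵥ y with hz
  have h1 : ‖ev z‖ ^ 2 = (A *ᵥ z) ⬝ᵥ y := by
    calc ‖ev z‖ ^ 2 = z ⬝ᵥ z := norm_ev_sq z
      _ = z ⬝ᵥ (Aᵀ *ᵥ y) := by rw [← hz]
      _ = (z ᵥ* Aᵀ) ⬝ᵥ y := dotProduct_mulVec z Aᵀ y
      _ = (A *ᵥ z) ⬝ᵥ y := by rw [vecMul_transpose]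
  have h2 : (A *ᵥ z) ⬝ᵥ y ≤ c * ‖ev z‖ * ‖ev y‖ :=
    le_trans (dot_le _ _) (by
      have := hA z
      nlinarith [norm_nonneg (ev y)])
  rcases eq_or_lt_of_le (norm_nonneg (ev z)) with h | h
  · rw [← h]; positivity
  · nlinarith

lemma quad_form {U V : Matrix (Fin d) (Fin d) ℝ} (hU : Uᵀ * U = 1) (s : Fin d → ℝ)
    (x : Fin d → ℝ) :
    ((U * diagonal s * Vᵀ) *ᵥ x) ⬝ᵥ ((U * diagonal s * Vᵀ) *ᵥ x)
      = ∑ i, s i ^ 2 * ((Vᵀ *ᵥ x) i) ^ 2 := by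
  rw [← mulVec_mulVec, ← mulVec_mulVec, orth_dot hU]
  simp [dotProduct, mulVec_diagonal]
  exact Finset.sum_congr rfl fun i _ => by ring

lemma quad_le {U V : Matrix (Fin d) (Fin d) ℝ} (hU : Uᵀ * U = 1) (hV : V * Vᵀ = 1)
    {s : Fin d → ℝ} {a : ℝ} (hs : ∀ i, s i ^ 2 ≤ a) (x : Fin d → ℝ) :
    ((U * diagonal s * Vᵀ) *ᵥ x) ⬝ᵥ ((U * diagonal s * Vᵀ) *ᵥ x) ≤ a * (x ⬝ᵥ x) := by
  rw [quad_form hU]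
  have h2 : (Vᵀ *ᵥ x) ⬝ᵥ (Vᵀ *ᵥ x) = x ⬝ᵥ x := by
    apply orth_dot; rwa [transpose_transpose]
  calc ∑ i, s i ^ 2 * ((Vᵀ *ᵥ x) i) ^ 2 ≤ ∑ i, a * ((Vᵀ *ᵥ x) i) ^ 2 :=
        Finset.sum_le_sum fun i _ => mul_le_mul_of_nonneg_right (hs i) (sq_nonneg _)
    _ = a * ∑ i, ((Vᵀ *ᵥ x) i) ^ 2 := by rw [Finset.mul_sum]
    _ = a * (x ⬝ᵥ x) := by rw [← h2]; congr 1; simp [dotProduct, sq]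

/-- norm bound from quadratic-form bound. -/
lemma op_bound_of_quad {A : Matrix (Fin d) (Fin d) ℝ} {a : ℝ} (ha : 0 ≤ a)
    (h : ∀ x, (A *ᵥ x) ⬝ᵥ (A *ᵥ x) ≤ a ^ 2 * (x ⬝ᵥ x)) (x : Fin d → ℝ) :
    ‖ev (A *ᵥ x)‖ ≤ a * ‖ev x‖ := by
  have h1 := h x
  rw [← norm_ev_sq, ← norm_ev_sq, ← mul_pow] at h1
  have h2 := Real.sqrt_le_sqrt h1
  rwa [Real.sqrt_sq (norm_nonneg _), Real.sqrt_sq (mul_nonneg ha (norm_nonneg _))] at h2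

lemma svd_col {U V : Matrix (Fin d) (Fin d) ℝ} (hV : Vᵀ * V = 1)
    (s : Fin d → ℝ) (i0 : Fin d) :
    (U * diagonal s * Vᵀ) *ᵥ (V *ᵥ Pi.single i0 1) = s i0 • (U *ᵥ Pi.single i0 1) := by
  rw [mulVec_mulVec, Matrix.mul_assoc, Matrix.mul_assoc, hV, Matrix.mul_one,
    ← mulVec_mulVec, diagonal_mulVec_single, mul_one]
  ext j
  simp [mulVec, dotProduct, Pi.single_apply, mul_comm]

lemma svd_colT {U V : Matrix (Fin d) (Fin d) ℝ} (hU : Uᵀ * U = 1)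
    (s : Fin d → ℝ) (i0 : Fin d) :
    (U * diagonal s * Vᵀ)ᵀ *ᵥ (U *ᵥ Pi.single i0 1) = s i0 • (V *ᵥ Pi.single i0 1) := by
  have h : (U * diagonal s * Vᵀ)ᵀ = V * diagonal s * Uᵀ := by
    simp [transpose_mul, diagonal_transpose, Matrix.mul_assoc]
  rw [h]
  exact svd_col hU s i0

lemma ATA {U V : Matrix (Fin d) (Fin d) ℝ} (hU : Uᵀ * U = 1) (s : Fin d → ℝ) :
    (U * diagonal s * Vᵀ)ᵀ * (U * diagonal s * Vᵀ)
      = V * diagonal (fun i => s i ^ 2) * Vᵀ := by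
  have h : (U * diagonal s * Vᵀ)ᵀ = V * diagonal s * Uᵀ := by
    simp [transpose_mul, diagonal_transpose, Matrix.mul_assoc]
  rw [h]
  calc V * diagonal s * Uᵀ * (U * diagonal s * Vᵀ)
      = V * (diagonal s * ((Uᵀ * U) * (diagonal s * Vᵀ))) := by
        simp only [Matrix.mul_assoc]
    _ = V * diagonal (fun i => s i ^ 2) * Vᵀ := by
        rw [hU, Matrix.one_mul, ← Matrix.mul_assoc (diagonal s), diagonal_mul_diagonal,
          ← Matrix.mul_assoc]
        have hss : (fun i => s i * s i) = fun i => s i ^ 2 := funext fun i => by ring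
        rw [hss]

lemma orth_of_mem {V : Matrix (Fin d) (Fin d) ℝ} (hV : V ∈ Matrix.orthogonalGroup (Fin d) ℝ) :
    Vᵀ * V = 1 := by
  have h1 := (Matrix.mem_orthogonalGroup_iff' (n := Fin d) (R := ℝ)).mp hV
  simpa [Matrix.star_eq_conjTranspose, Matrix.conjTranspose, Matrix.transpose] using h1

lemma orth_of_mem' {V : Matrix (Fin d) (Fin d) ℝ} (hV : V ∈ Matrix.orthogonalGroup (Fin d) ℝ) :
    V * Vᵀ = 1 := by
  have h1 := (Matrix.mem_orthogonalGroup_iff (n := Fin d) (R := ℝ)).mp hV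
  simpa [Matrix.star_eq_conjTranspose, Matrix.conjTranspose, Matrix.transpose] using h1

lemma gap_arith {s0 s1 t s'0 δ g : ℝ} (h1 : t ≤ s1) (h2 : 0 ≤ t) (h3 : s0 - δ ≤ s'0)
    (h4 : 0 ≤ s'0) (h5 : 0 < g) (h6 : g ≤ s0 - s1) (h7 : δ ≤ g / 4) (h8 : 0 ≤ s1)
    (h9 : 0 ≤ δ) :
    9/16 * (g * s0) ≤ s'0 ^ 2 - t ^ 2 := by
  have h9' : g ≤ s0 := by linarith
  have e1 : 0 ≤ s'0 - (s0 - δ) := by linarith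
  have e2 : 0 ≤ s'0 + (s0 - δ) := by linarith
  have e3 : 3/4 * g * (3/4 * s0) ≤ (g - δ) * (s0 - δ + t) :=
    mul_le_mul (by linarith) (by linarith) (by linarith) (by linarith)
  have e4 : (g - δ) * (s0 - δ + t) ≤ (s0 - δ - t) * (s0 - δ + t) :=
    mul_le_mul_of_nonneg_right (by linarith) (by linarith)
  nlinarith [mul_nonneg e1 e2]

lemma div_arith {S s0 δ g : ℝ} (hs0 : 0 < s0) (hg : 0 < g)
    (h2 : (9/16 * (g * s0)) ^ 2 * S ≤ (9/4 * (δ * s0)) ^ 2) :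
    S * g ^ 2 ≤ 16 * δ ^ 2 := by
  nlinarith [mul_pos hs0 hs0]

lemma final_arith_neg {c0 q : ℝ} (hfin : 1 - 16 * q ≤ c0 ^ 2) (hcle : c0 ^ 2 ≤ 1)
    (hneg : c0 ≤ 0) (hq : 0 ≤ q) : 2 + 2 * c0 ≤ 36 * q := by
  have hcge1 : -1 ≤ c0 := by nlinarith
  nlinarith [mul_nonneg (by linarith : (0:ℝ) ≤ -c0) (by linarith : (0:ℝ) ≤ 1 + c0)]

lemma final_arith_pos {c0 q : ℝ} (hfin : 1 - 16 * q ≤ c0 ^ 2) (hcle : c0 ^ 2 ≤ 1)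
    (hpos : 0 ≤ c0) (hq : 0 ≤ q) : 2 - 2 * c0 ≤ 36 * q := by
  have hcle1 : c0 ≤ 1 := by nlinarith
  nlinarith [mul_nonneg hpos (by linarith : (0:ℝ) ≤ 1 - c0)]

end Stmt17Aux

open Stmt17Aux

set_option maxHeartbeats 1000000 in
/-- Wedin's bound for the top singular vector: there is an absolute constant
`C` such that if `M, M'` have singular value decompositions with top right singular vectors
`u_1(M), u_1(M')` (first columns of `V`, `V'`), `‖M − M'‖ ≤ δ`, and the spectral gap
satisfies `s_1(M) − s_2(M) ≥ g > 0` with `δ ≤ g/4`, then for a suitable choice of signs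
`‖u_1(M) ∓ u_1(M')‖ ≤ C δ / g`. -/
theorem stmt17 :
    ∃ C : ℝ, 0 < C ∧
    ∀ (d : ℕ) (hd : 2 ≤ d)
      (M M' : Matrix (Fin d) (Fin d) ℝ)
      (s s' : Fin d → ℝ) (U V U' V' : Matrix (Fin d) (Fin d) ℝ)
      (δ g : ℝ),
      Antitone s → (∀ j, 0 ≤ s j) → Antitone s' → (∀ j, 0 ≤ s' j) →
      U ∈ Matrix.orthogonalGroup (Fin d) ℝ → V ∈ Matrix.orthogonalGroup (Fin d) ℝ →
      U' ∈ Matrix.orthogonalGroup (Fin d) ℝ → V' ∈ Matrix.orthogonalGroup (Fin d) ℝ →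
      M = U * Matrix.diagonal s * Vᵀ → M' = U' * Matrix.diagonal s' * V'ᵀ →
      ‖Matrix.toEuclideanCLM (𝕜 := ℝ) (M - M')‖ ≤ δ →
      0 < g → g ≤ s ⟨0, by omega⟩ - s ⟨1, by omega⟩ → δ ≤ g / 4 →
      (Real.sqrt (∑ i, (V i ⟨0, by omega⟩ - V' i ⟨0, by omega⟩) ^ 2) ≤ C * δ / g ∨
       Real.sqrt (∑ i, (V i ⟨0, by omega⟩ + V' i ⟨0, by omega⟩) ^ 2) ≤ C * δ / g) := by
  classical
  refine ⟨6, by norm_num, ?_⟩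
  intro d hd M M' s s' U V U' V' δ g hs_anti hs_nonneg hs'_anti hs'_nonneg hUo hVo hU'o
    hV'o hM hM' hδ hg hgap hδg
  have hd0 : 0 < d := by omega
  set i0 : Fin d := ⟨0, by omega⟩ with hi0
  set i1 : Fin d := ⟨1, by omega⟩ with hi1
  have hU1 : Uᵀ * U = 1 := orth_of_mem hUo
  have hV1 : Vᵀ * V = 1 := orth_of_mem hVo
  have hV2 : V * Vᵀ = 1 := orth_of_mem' hVo
  have hU'1 : U'ᵀ * U' = 1 := orth_of_mem hU'o
  have hV'1 : V'ᵀ * V' = 1 := orth_of_mem hV'o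
  have hδ0 : 0 ≤ δ := le_trans (norm_nonneg _) hδ
  have hs1nn : 0 ≤ s i1 := hs_nonneg i1
  have hgs : g ≤ s i0 := by linarith [hgap]
  have hs0pos : 0 < s i0 := lt_of_lt_of_le hg hgs
  set e0 : Fin d → ℝ := Pi.single i0 1 with he0
  set v : Fin d → ℝ := V *ᵥ e0 with hv
  set v' : Fin d → ℝ := V' *ᵥ e0 with hv'
  have hvcol : ∀ i, v i = V i i0 := fun i => by
    rw [hv]; simp [mulVec, dotProduct, he0, Pi.single_apply]
  have hv'col : ∀ i, v' i = V' i i0 := fun i => by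
    rw [hv']; simp [mulVec, dotProduct, he0, Pi.single_apply]
  have he00 : e0 ⬝ᵥ e0 = 1 := by simp [he0, dotProduct, Pi.single_apply]
  have hvv : v ⬝ᵥ v = 1 := by rw [hv, orth_dot hV1, he00]
  have hv'v' : v' ⬝ᵥ v' = 1 := by rw [hv', orth_dot hV'1, he00]
  have hnv : ‖ev v‖ = 1 := norm_ev_one hvv
  have hnv' : ‖ev v'‖ = 1 := norm_ev_one hv'v'
  set B : Matrix (Fin d) (Fin d) ℝ := M - M' with hB
  -- operator norm bounds
  have opB : ∀ x, ‖ev (B *ᵥ x)‖ ≤ δ * ‖ev x‖ := by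
    intro x
    have h1 : ev (B *ᵥ x) = Matrix.toEuclideanCLM (𝕜 := ℝ) B (ev x) := by
      rw [show ev x = (WithLp.equiv 2 (Fin d → ℝ)).symm x from rfl,
        WithLp.equiv_symm_apply, Matrix.toEuclideanCLM_toLp]
      simp [ev, Matrix.toLin'_apply]
    rw [h1]
    calc ‖Matrix.toEuclideanCLM (𝕜 := ℝ) B (ev x)‖
        ≤ ‖Matrix.toEuclideanCLM (𝕜 := ℝ) B‖ * ‖ev x‖ := ContinuousLinearMap.le_opNorm _ _
      _ ≤ δ * ‖ev x‖ := mul_le_mul_of_nonneg_right hδ (norm_nonneg _)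
  have hsle : ∀ i, s i ^ 2 ≤ s i0 ^ 2 := by
    intro i
    have : s i ≤ s i0 := hs_anti (by simp [hi0, Fin.le_def])
    nlinarith [hs_nonneg i]
  have hs'le : ∀ i, s' i ^ 2 ≤ s' i0 ^ 2 := by
    intro i
    have : s' i ≤ s' i0 := hs'_anti (by simp [hi0, Fin.le_def])
    nlinarith [hs'_nonneg i]
  have opM : ∀ x, ‖ev (M *ᵥ x)‖ ≤ s i0 * ‖ev x‖ := by
    apply op_bound_of_quad (hs_nonneg i0)
    intro x
    rw [hM]
    exact quad_le hU1 hV2 hsle x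
  have opM' : ∀ x, ‖ev (M' *ᵥ x)‖ ≤ s' i0 * ‖ev x‖ := by
    apply op_bound_of_quad (hs'_nonneg i0)
    intro x
    rw [hM']
    exact quad_le hU'1 (orth_of_mem' hV'o) hs'le x
  have opMT : ∀ x, ‖ev (Mᵀ *ᵥ x)‖ ≤ s i0 * ‖ev x‖ :=
    transpose_op_bound (hs_nonneg i0) opM
  have opBT : ∀ x, ‖ev (Bᵀ *ᵥ x)‖ ≤ δ * ‖ev x‖ := transpose_op_bound hδ0 opB
  -- exact actions on top singular vectors
  have hMv : M *ᵥ v = s i0 • (U *ᵥ e0) := by rw [hM, hv]; exact svd_col hV1 s i0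
  have hM'v' : M' *ᵥ v' = s' i0 • (U' *ᵥ e0) := by rw [hM', hv']; exact svd_col hV'1 s' i0
  have hnUe : ‖ev (U *ᵥ e0)‖ = 1 := norm_ev_one (by rw [orth_dot hU1, he00])
  have hnMv : ‖ev (M *ᵥ v)‖ = s i0 := by
    rw [hMv, ev_smul, norm_smul, hnUe, mul_one, Real.norm_eq_abs,
      abs_of_nonneg (hs_nonneg i0)]
  -- lower bound for s' i0
  have hsub : M' *ᵥ v = M *ᵥ v - B *ᵥ v := by rw [hB, sub_mulVec]; abel
  have hs'low : s i0 - δ ≤ s' i0 := by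
    have h1 : ‖ev (M *ᵥ v)‖ - ‖ev (B *ᵥ v)‖ ≤ ‖ev (M' *ᵥ v)‖ := by
      rw [hsub, ev_sub]
      exact norm_sub_norm_le _ _
    have h2 := opM' v
    have h3 := opB v
    rw [hnv, mul_one] at h2 h3
    rw [hnMv] at h1
    linarith
  -- upper bound for ‖M' v'‖
  have hsub' : M' *ᵥ v' = M *ᵥ v' - B *ᵥ v' := by rw [hB, sub_mulVec]; abel
  have hnM'v' : ‖ev (M' *ᵥ v')‖ ≤ s i0 + δ := by
    rw [hsub', ev_sub]
    have h2 := opM v'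
    have h3 := opB v'
    rw [hnv', mul_one] at h2 h3
    calc ‖ev (M *ᵥ v') - ev (B *ᵥ v')‖ ≤ ‖ev (M *ᵥ v')‖ + ‖ev (B *ᵥ v')‖ := norm_sub_le _ _
      _ ≤ s i0 + δ := add_le_add h2 h3
  -- the residual vector
  set r : Fin d → ℝ := Mᵀ *ᵥ (B *ᵥ v') + Bᵀ *ᵥ (M' *ᵥ v') with hr
  have hnr : ‖ev r‖ ≤ δ * (2 * s i0 + δ) := by
    rw [hr, ev_add]
    have h1 : ‖ev (Mᵀ *ᵥ (B *ᵥ v'))‖ ≤ s i0 * δ := by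
      have := opMT (B *ᵥ v')
      have h3 := opB v'
      rw [hnv', mul_one] at h3
      nlinarith [norm_nonneg (ev (B *ᵥ v')), hs_nonneg i0]
    have h2 : ‖ev (Bᵀ *ᵥ (M' *ᵥ v'))‖ ≤ δ * (s i0 + δ) := by
      have := opBT (M' *ᵥ v')
      nlinarith [norm_nonneg (ev (M' *ᵥ v'))]
    calc ‖ev (Mᵀ *ᵥ (B *ᵥ v')) + ev (Bᵀ *ᵥ (M' *ᵥ v'))‖
        ≤ ‖ev (Mᵀ *ᵥ (B *ᵥ v'))‖ + ‖ev (Bᵀ *ᵥ (M' *ᵥ v'))‖ := norm_add_le _ _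
      _ ≤ s i0 * δ + δ * (s i0 + δ) := add_le_add h1 h2
      _ = δ * (2 * s i0 + δ) := by ring
  -- the key algebraic identity
  have hM'd : M'ᵀ *ᵥ (M' *ᵥ v') = (s' i0 ^ 2) • v' := by
    rw [hM'v', mulVec_smul, hM', svd_colT hU'1, ← hv', smul_smul, sq]
  have hkey : Mᵀ *ᵥ (M *ᵥ v') = (s' i0 ^ 2) • v' + r := by
    rw [hr, ← hM'd, hB]
    simp only [transpose_sub, sub_mulVec, mulVec_sub]
    abel
  set c : Fin d → ℝ := Vᵀ *ᵥ v' with hc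
  have hVT1 : Vᵀᵀ * Vᵀ = 1 := by rwa [transpose_transpose]
  have hcc : c ⬝ᵥ c = 1 := by rw [hc, orth_dot hVT1, hv'v']
  set w : Fin d → ℝ := Vᵀ *ᵥ r with hw
  have hww : w ⬝ᵥ w = r ⬝ᵥ r := by rw [hw, orth_dot hVT1]
  have hcomp : ∀ i, s i ^ 2 * c i = s' i0 ^ 2 * c i + w i := by
    have h2 : Vᵀ *ᵥ (Mᵀ *ᵥ (M *ᵥ v')) = (diagonal fun i => s i ^ 2) *ᵥ c := by
      rw [mulVec_mulVec v' Mᵀ M, mulVec_mulVec v' Vᵀ (Mᵀ * M), hM, ATA hU1]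
      have h4 : Vᵀ * (V * diagonal (fun i => s i ^ 2) * Vᵀ)
          = diagonal (fun i => s i ^ 2) * Vᵀ := by
        rw [Matrix.mul_assoc V, ← Matrix.mul_assoc Vᵀ, hV1, Matrix.one_mul]
      rw [h4, ← mulVec_mulVec, hc]
    intro i
    have h3 := congrArg (fun y => (Vᵀ *ᵥ y) i) hkey
    rw [h2] at h3
    rw [mulVec_add, mulVec_smul] at h3
    simpa [mulVec_diagonal] using h3

  -- spectral gap bound for eigenvalue differences
  have hs0d : 0 ≤ s i0 - δ := by linarith
  have hgap2 : ∀ i, i ≠ i0 → 9/16 * (g * s i0) ≤ s' i0 ^ 2 - s i ^ 2 := by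
    intro i hi
    have hii : i1 ≤ i := by
      rw [Fin.le_def]
      have hne : (i : ℕ) ≠ 0 := by
        intro h
        exact hi (Fin.ext (by simp [hi0, h]))
      simp only [hi1]
      omega
    exact gap_arith (hs_anti hii) (hs_nonneg i) hs'low (hs'_nonneg i0) hg hgap hδg
      hs1nn hδ0
  set D0 : ℝ := 9/16 * (g * s i0) with hD0
  have hD0pos : 0 < D0 := by
    have := mul_pos hg hs0pos
    rw [hD0]; linarith
  have hcw : ∀ i, i ≠ i0 → D0 ^ 2 * c i ^ 2 ≤ w i ^ 2 := by
    intro i hi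
    have h1 := hcomp i
    have h2 := hgap2 i hi
    have h3 : w i = (s i ^ 2 - s' i0 ^ 2) * c i := by linear_combination -h1
    have h4 : D0 ^ 2 ≤ (s' i0 ^ 2 - s i ^ 2) ^ 2 := by nlinarith [hD0pos.le]
    calc D0 ^ 2 * c i ^ 2 ≤ (s' i0 ^ 2 - s i ^ 2) ^ 2 * c i ^ 2 :=
          mul_le_mul_of_nonneg_right h4 (sq_nonneg _)
      _ = ((s i ^ 2 - s' i0 ^ 2) * c i) ^ 2 := by ring
      _ = w i ^ 2 := by rw [← h3]
  have hrr : r ⬝ᵥ r ≤ (δ * (2 * s i0 + δ)) ^ 2 := by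
    rw [← norm_ev_sq]
    exact pow_le_pow_left₀ (norm_nonneg _) hnr 2
  have hsum : D0 ^ 2 * ∑ i ∈ univ.erase i0, c i ^ 2 ≤ (δ * (2 * s i0 + δ)) ^ 2 := by
    calc D0 ^ 2 * ∑ i ∈ univ.erase i0, c i ^ 2
        = ∑ i ∈ univ.erase i0, D0 ^ 2 * c i ^ 2 := Finset.mul_sum _ _ _
      _ ≤ ∑ i ∈ univ.erase i0, w i ^ 2 :=
          Finset.sum_le_sum fun i hi => hcw i (Finset.ne_of_mem_erase hi)
      _ ≤ ∑ i, w i ^ 2 :=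
          Finset.sum_le_sum_of_subset_of_nonneg (Finset.erase_subset _ _)
            (fun i _ _ => sq_nonneg _)
      _ = w ⬝ᵥ w := by simp [dotProduct, sq]
      _ = r ⬝ᵥ r := hww
      _ ≤ _ := hrr
  have hS : ∑ i ∈ univ.erase i0, c i ^ 2 ≤ 16 * (δ ^ 2 / g ^ 2) := by
    have hK : δ * (2 * s i0 + δ) ≤ 9/4 * (δ * s i0) := by
      nlinarith [mul_nonneg hδ0 (by linarith : (0:ℝ) ≤ s i0 / 4 - δ)]
    have hK2 : (δ * (2 * s i0 + δ)) ^ 2 ≤ (9/4 * (δ * s i0)) ^ 2 :=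
      pow_le_pow_left₀ (by nlinarith [mul_nonneg hδ0 (hs_nonneg i0)]) hK 2
    have h2 : D0 ^ 2 * ∑ i ∈ univ.erase i0, c i ^ 2 ≤ (9/4 * (δ * s i0)) ^ 2 :=
      le_trans hsum hK2
    have hg2 : (0:ℝ) < g ^ 2 := by positivity
    rw [← mul_div_assoc, le_div_iff₀ hg2]
    rw [hD0] at h2
    exact div_arith hs0pos hg h2
  have hc0sum : c i0 ^ 2 + ∑ i ∈ univ.erase i0, c i ^ 2 = 1 := by
    have h1 : c ⬝ᵥ c = ∑ i, c i ^ 2 := by simp [dotProduct, sq]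
    rw [← hcc, h1, ← Finset.add_sum_erase _ _ (Finset.mem_univ i0)]
  have herasenn : 0 ≤ ∑ i ∈ univ.erase i0, c i ^ 2 :=
    Finset.sum_nonneg fun i _ => sq_nonneg _
  have hfin : 1 - 16 * (δ ^ 2 / g ^ 2) ≤ c i0 ^ 2 := by linarith [hS, hc0sum]
  have hcle : c i0 ^ 2 ≤ 1 := by linarith [hc0sum, herasenn]
  have hqnn : (0:ℝ) ≤ δ ^ 2 / g ^ 2 := by positivity
  have hci0 : c i0 = ∑ i, V i i0 * V' i i0 := by
    rw [hc]
    simp only [mulVec, dotProduct, transpose_apply]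
    exact Finset.sum_congr rfl fun j _ => by rw [hv'col]
  have hVsum : ∑ i, V i i0 ^ 2 = 1 := by
    rw [← hvv]
    exact Finset.sum_congr rfl fun i _ => by rw [hvcol]; ring
  have hV'sum : ∑ i, V' i i0 ^ 2 = 1 := by
    rw [← hv'v']
    exact Finset.sum_congr rfl fun i _ => by rw [hv'col]; ring
  have h6 : (0:ℝ) ≤ 6 * δ / g := by positivity
  rcases le_or_gt 0 (c i0) with hpos | hneg
  · left
    have hexp : ∑ i, (V i i0 - V' i i0) ^ 2 = 2 - 2 * c i0 := by
      have e1 : ∀ i : Fin d, (V i i0 - V' i i0) ^ 2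
          = V i i0 ^ 2 + V' i i0 ^ 2 - 2 * (V i i0 * V' i i0) := fun i => by ring
      rw [Finset.sum_congr rfl fun i _ => e1 i]
      rw [Finset.sum_sub_distrib, Finset.sum_add_distrib, ← Finset.mul_sum,
        hVsum, hV'sum, ← hci0]
      ring
    have hle : ∑ i, (V i i0 - V' i i0) ^ 2 ≤ (6 * δ / g) ^ 2 := by
      have hsq : (6 * δ / g) ^ 2 = 36 * (δ ^ 2 / g ^ 2) := by ring
      rw [hexp, hsq]
      exact final_arith_pos hfin hcle hpos hqnn
    calc Real.sqrt (∑ i, (V i i0 - V' i i0) ^ 2)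
        ≤ Real.sqrt ((6 * δ / g) ^ 2) := Real.sqrt_le_sqrt hle
      _ = 6 * δ / g := Real.sqrt_sq h6
  · right
    have hexp : ∑ i, (V i i0 + V' i i0) ^ 2 = 2 + 2 * c i0 := by
      have e1 : ∀ i : Fin d, (V i i0 + V' i i0) ^ 2
          = V i i0 ^ 2 + V' i i0 ^ 2 + 2 * (V i i0 * V' i i0) := fun i => by ring
      rw [Finset.sum_congr rfl fun i _ => e1 i]
      rw [Finset.sum_add_distrib, Finset.sum_add_distrib, ← Finset.mul_sum,
        hVsum, hV'sum, ← hci0]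
      ring
    have hle : ∑ i, (V i i0 + V' i i0) ^ 2 ≤ (6 * δ / g) ^ 2 := by
      have hsq : (6 * δ / g) ^ 2 = 36 * (δ ^ 2 / g ^ 2) := by ring
      rw [hexp, hsq]
      exact final_arith_neg hfin hcle hneg.le hqnn
    calc Real.sqrt (∑ i, (V i i0 + V' i i0) ^ 2)
        ≤ Real.sqrt ((6 * δ / g) ^ 2) := Real.sqrt_le_sqrt hle
      _ = 6 * δ / g := Real.sqrt_sq h6
end
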